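/- Let n ≥ 1, let V be a finite-dimensional real inner product space, and let F : Seg_n → {subspaces of V} be intersection-monotone. Then the family {O_×(F)(s)}_{s ∈ Seg_n} is a transverse family: dim(∑_{s ∈ Seg_n} O_×(F)(s)) = ∑_{s ∈ Seg_n} dim(O_×(F)(s)). -/

import Mathlib

/-- Difference of subspaces: `W₁ ⊖ W₂ := W₁ ⊓ W₂ᗮ`. -/
noncomputable def sdiffOrtho {V : Type*} [NormedAddCommGroup V] [InnerProductSpace ℝ V]
    (W₁ W₂ : Submodule ℝ V) : Submodule ℝ V :=
  W₁ ⊓ W₂ᗮ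

/-- The set of segments of the linear poset `{1 < ⋯ < n}`, as a `Finset` of pairs
`(i, j)` with `1 ≤ i ≤ j ≤ n + 1` (the value `n + 1` encoding `∞`), carrying the
product order of `ℕ × ℕ`. -/
def SegFinset (n : ℕ) : Finset (ℕ × ℕ) :=
  (Finset.Icc 1 (n + 1) ×ˢ Finset.Icc 1 (n + 1)).filter fun p => p.1 ≤ p.2

/-- The ×-Linear Orthogonal Inverse of `F`, where `F` is assumed to incorporate the
convention `F 0 j = ⊥`. -/
noncomputable def Ox {V : Type*} [NormedAddCommGroup V] [InnerProductSpace ℝ V]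
    (F : ℕ → ℕ → Submodule ℝ V) (i j : ℕ) : Submodule ℝ V :=
  if i = j then sdiffOrtho (F i i) (F (i - 1) i)
  else
    sdiffOrtho (sdiffOrtho (F i j) (F i (j - 1)))
      (sdiffOrtho (F (i - 1) j) (F (i - 1) (j - 1)))

open Module Submodule Finset

section Aux
variable {V : Type*} [NormedAddCommGroup V] [InnerProductSpace ℝ V] [FiniteDimensional ℝ V]

/-- Projection onto `A` as an endomorphism of `V`. -/
noncomputable def projL (A : Submodule ℝ V) : V →ₗ[ℝ] V :=
  A.subtype ∘ₗ (orthogonalProjection A).toLinearMap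

lemma projL_mem (A : Submodule ℝ V) (v : V) : projL A v ∈ A := by
  simp [projL]

lemma sub_projL_mem (A : Submodule ℝ V) (v : V) : v - projL A v ∈ Aᗮ := by
  simpa [projL] using sub_orthogonalProjection_mem_orthogonal (K := A) v

lemma inner_projL (A : Submodule ℝ V) (v a : V) (ha : a ∈ A) :
    (inner ℝ v a) = inner ℝ (projL A v) a := by
  have h : (inner ℝ (v - projL A v) a) = 0 :=
    (Submodule.mem_orthogonal' A _).mp (sub_projL_mem A v) a ha
  have h2 := inner_sub_left (𝕜 := ℝ) v (projL A v) a
  rw [h] at h2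
  linarith

/-- If `v ∈ A` and `v ⊥ (A ⊓ Dᗮ)` with `D ≤ A`, then `v ∈ D`. -/
lemma ortho_inf_le (A D : Submodule ℝ V) (hD : D ≤ A) : A ⊓ (A ⊓ Dᗮ)ᗮ ≤ D := by
  rintro v ⟨hvA, hv⟩
  have hr : v - projL D v ∈ A ⊓ Dᗮ :=
    ⟨A.sub_mem hvA (hD (projL_mem D v)), sub_projL_mem D v⟩
  have h0 : (inner ℝ (v - projL D v) v) = 0 :=
    (mem_orthogonal (A ⊓ Dᗮ) v).mp hv _ hr
  have h1 : (inner ℝ (v - projL D v) (projL D v)) = 0 :=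
    (Submodule.mem_orthogonal' D _).mp (sub_projL_mem D v) _ (projL_mem D v)
  have h2 : (inner ℝ (v - projL D v) (v - projL D v)) = 0 := by
    rw [inner_sub_right, h0, h1]; ring
  have h3 : v - projL D v = 0 := inner_self_eq_zero.mp h2
  have h4 : v = projL D v := by
    have := sub_eq_zero.mp h3; exact this
  rw [h4]; exact projL_mem D v

/-- `D ⊔ (A ⊓ Dᗮ) = A` when `D ≤ A`. -/
lemma sup_sdiff_eq (A D : Submodule ℝ V) (hD : D ≤ A) : D ⊔ (A ⊓ Dᗮ) = A := by
  apply le_antisymm (sup_le hD inf_le_left)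
  intro v hvA
  have hv : v = projL D v + (v - projL D v) := by abel
  rw [hv]
  exact Submodule.add_mem_sup (projL_mem D v)
    ⟨A.sub_mem hvA (hD (projL_mem D v)), sub_projL_mem D v⟩

/-- `A ⊓ Bᗮ = A ⊓ Qᗮ` where `Q` is the projection of `B` into `A`. -/
lemma inf_orthogonal_map_proj (A B : Submodule ℝ V) :
    A ⊓ Bᗮ = A ⊓ (B.map (projL A))ᗮ := by
  ext v
  simp only [Submodule.mem_inf, Submodule.mem_orthogonal]
  constructor
  · rintro ⟨hvA, h⟩
    refine ⟨hvA, ?_⟩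
    rintro u ⟨b, hb, rfl⟩
    rw [← inner_projL A b v hvA]
    exact h b hb
  · rintro ⟨hvA, h⟩
    refine ⟨hvA, ?_⟩
    intro b hb
    rw [inner_projL A b v hvA]
    exact h _ ⟨b, hb, rfl⟩

/-- Rank formula: if `B ⊓ Aᗮ = ⊥` then `finrank (A ⊓ Bᗮ) + finrank B = finrank A`. -/
lemma finrank_inf_orthogonal' (A B : Submodule ℝ V) (h : B ⊓ Aᗮ = ⊥) :
    finrank ℝ ↥(A ⊓ Bᗮ) + finrank ℝ ↥B = finrank ℝ ↥A := by
  set Q := B.map (projL A) with hQ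
  have hQA : Q ≤ A := by
    rintro q ⟨b, hb, rfl⟩; exact projL_mem A b
  have hrank : finrank ℝ ↥Q = finrank ℝ ↥B := by
    have hinj : Function.Injective ((projL A).domRestrict B) := by
      rw [← LinearMap.ker_eq_bot, eq_bot_iff]
      rintro ⟨b, hb⟩ hker
      have h0 : projL A b = 0 := hker
      have hbA : b ∈ Aᗮ := by
        have h1 : b - projL A b ∈ Aᗮ := sub_projL_mem A b
        rw [h0, sub_zero] at h1; exact h1
      have hmem : b ∈ B ⊓ Aᗮ := ⟨hb, hbA⟩
      rw [h] at hmem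
      have hb0 : b = 0 := by simpa using hmem
      simp [Submodule.mem_bot, Subtype.ext_iff, hb0]
    have hr : LinearMap.range ((projL A).domRestrict B) = Q := by
      ext x
      constructor
      · rintro ⟨⟨b, hb⟩, rfl⟩; exact ⟨b, hb, rfl⟩
      · rintro ⟨b, hb, rfl⟩; exact ⟨⟨b, hb⟩, rfl⟩
    rw [← hr, LinearMap.finrank_range_of_inj hinj]
  have hmain := Submodule.finrank_add_inf_finrank_orthogonal (K₁ := Q) (K₂ := A) hQA
  rw [inf_orthogonal_map_proj A B, ← hQ, ← hrank]
  rw [inf_comm Qᗮ A] at hmain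
  omega

lemma inf_orthogonal_bot_of_le {A B : Submodule ℝ V} (h : B ≤ A) : B ⊓ Aᗮ = ⊥ := by
  rw [eq_bot_iff]
  rintro v ⟨hvB, hvA⟩
  exact (Submodule.orthogonal_disjoint A).le_bot ⟨h hvB, hvA⟩

/-- Spanning step: `A ≤ ((A ⊓ Dᗮ) ⊓ Bᗮ) ⊔ (B ⊔ D)`. -/
lemma span_step (A B D : Submodule ℝ V) (hD : D ≤ A) (hB : B ≤ A) :
    A ≤ ((A ⊓ Dᗮ) ⊓ Bᗮ) ⊔ (B ⊔ D) := by
  set G := A ⊓ Dᗮ with hG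
  set Q := B.map (projL G) with hQdef
  have hQG : Q ≤ G := by rintro q ⟨b, hb, rfl⟩; exact projL_mem G b
  have hGA : G ≤ A := inf_le_left
  have hQBD : Q ≤ B ⊔ D := by
    rintro q ⟨b, hb, rfl⟩
    have hd : b - projL G b ∈ D := by
      apply ortho_inf_le A D hD
      exact ⟨A.sub_mem (hB hb) (hGA (projL_mem G b)), sub_projL_mem G b⟩
    have hq : projL G b = b - (b - projL G b) := by abel
    rw [hq]
    exact Submodule.sub_mem _ (Submodule.mem_sup_left hb) (Submodule.mem_sup_right hd)
  calc A = D ⊔ G := (sup_sdiff_eq A D hD).symm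
    _ = D ⊔ (Q ⊔ (G ⊓ Qᗮ)) := by rw [sup_sdiff_eq G Q hQG]
    _ = D ⊔ (Q ⊔ (G ⊓ Bᗮ)) := by rw [hQdef, ← inf_orthogonal_map_proj G B]
    _ ≤ (G ⊓ Bᗮ) ⊔ (B ⊔ D) := by
        apply sup_le
        · exact le_sup_of_le_right le_sup_right
        · apply sup_le
          · exact le_trans hQBD le_sup_right
          · exact le_sup_left

/-- Sum of submodules equals finset sup. -/
lemma sum_eq_sup' {ι : Type*} [DecidableEq ι] (s : Finset ι) (f : ι → Submodule ℝ V) :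
    ∑ p ∈ s, f p = s.sup f := by
  induction s using Finset.induction with
  | empty => simp
  | insert _ _ hx ih =>
      rename_i a s' _
      rw [Finset.sum_insert hx, Finset.sup_insert, ih, Submodule.add_eq_sup]

end Aux

/-- Telescoping sum. -/
lemma telescope_Ioc (g : ℕ → ℤ) (a : ℕ) : ∀ b, a ≤ b →
    ∑ j ∈ Finset.Ioc a b, (g j - g (j - 1)) = g b - g a := by
  intro b
  induction b with
  | zero => intro h; interval_cases a; simp
  | succ b ih =>
    intro h
    rcases Nat.lt_or_ge a (b + 1) with h' | h'
    · have hab : a ≤ b := by omega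
      rw [Finset.sum_Ioc_succ_top hab, ih hab]
      simp only [Nat.add_sub_cancel]
      ring
    · have ha : a = b + 1 := by omega
      subst ha; simp

/-- Reindexing a sum over `SegFinset`. -/
lemma sum_SegFinset {M : Type*} [AddCommMonoid M] (n : ℕ) (h : ℕ → ℕ → M) :
    ∑ p ∈ SegFinset n, h p.1 p.2
      = ∑ i ∈ Finset.Icc 1 (n + 1), ∑ j ∈ Finset.Icc i (n + 1), h i j := by
  rw [SegFinset, Finset.sum_filter, Finset.sum_product]
  apply Finset.sum_congr rfl
  intro i hi
  rw [Finset.mem_Icc] at hi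
  rw [← Finset.sum_filter]
  apply Finset.sum_congr
  · ext j
    simp only [Finset.mem_filter, Finset.mem_Icc]
    omega
  · intros; rfl
/-- For an intersection-monotone function `F` on the segments of `{1 < ⋯ < n}`, the
family `{O_×(F)(s)}_{s ∈ Seg_n}` is a transverse family: the dimension of the sum of
all its members equals the sum of their dimensions. -/
theorem timesOrthogonalInverse_transverse
    {V : Type*} [NormedAddCommGroup V] [InnerProductSpace ℝ V] [FiniteDimensional ℝ V]
    (n : ℕ) (hn : 1 ≤ n) (F : ℕ → ℕ → Submodule ℝ V)
    (hF0 : ∀ j : ℕ, F 0 j = ⊥)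
    (hmono : ∀ i j k l : ℕ, 1 ≤ i → i ≤ j → j ≤ n + 1 → 1 ≤ k → k ≤ l → l ≤ n + 1 →
      i ≤ k → j ≤ l → F i j ≤ F k l)
    (hint : ∀ i j : ℕ, 1 ≤ i → i < j → j ≤ n → F (i + 1) j ⊓ F i (j + 1) = F i j) :
    Module.finrank ℝ ↥(∑ p ∈ SegFinset n, Ox F p.1 p.2) =
      ∑ p ∈ SegFinset n, Module.finrank ℝ ↥(Ox F p.1 p.2) := by
  classical
  -- monotonicity including the `i = 0` convention
  have hle : ∀ i j k l : ℕ, i ≤ j → 1 ≤ k → k ≤ l → l ≤ n + 1 → i ≤ k → j ≤ l →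
      F i j ≤ F k l := by
    intro i j k l h1 h2 h3 h4 h5 h6
    rcases Nat.eq_zero_or_pos i with rfl | hi
    · rw [hF0]; exact bot_le
    · exact hmono i j k l hi h1 (by omega) h2 h3 h4 h5 h6
  -- diagonal rank formula
  have hdiag : ∀ i : ℕ, 1 ≤ i → i ≤ n + 1 →
      finrank ℝ ↥(Ox F i i) + finrank ℝ ↥(F (i - 1) i) = finrank ℝ ↥(F i i) := by
    intro i h1 h2
    have hD : F (i - 1) i ≤ F i i := hle (i - 1) i i i (by omega) h1 le_rfl h2 (by omega) le_rfl
    have hOxeq : Ox F i i = F i i ⊓ (F (i - 1) i)ᗮ := by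
      simp [Ox, sdiffOrtho]
    rw [hOxeq]
    exact finrank_inf_orthogonal' _ _ (inf_orthogonal_bot_of_le hD)
  -- off-diagonal rank formula
  have hoff : ∀ i j : ℕ, 1 ≤ i → i < j → j ≤ n + 1 →
      finrank ℝ ↥(Ox F i j) + finrank ℝ ↥(F (i - 1) j) + finrank ℝ ↥(F i (j - 1))
        = finrank ℝ ↥(F i j) + finrank ℝ ↥(F (i - 1) (j - 1)) := by
    intro i j h1 h2 h3
    have hne : ¬ (i = j) := by omega
    have hD : F i (j - 1) ≤ F i j := hle i (j - 1) i j (by omega) h1 (by omega) h3 le_rfl (by omega)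
    have hOxeq : Ox F i j = (F i j ⊓ (F i (j - 1))ᗮ) ⊓ (F (i - 1) j ⊓ (F (i - 1) (j - 1))ᗮ)ᗮ := by
      simp only [Ox, sdiffOrtho, if_neg hne]
    have hG : finrank ℝ ↥(F i j ⊓ (F i (j - 1))ᗮ) + finrank ℝ ↥(F i (j - 1))
        = finrank ℝ ↥(F i j) :=
      finrank_inf_orthogonal' _ _ (inf_orthogonal_bot_of_le hD)
    rcases eq_or_lt_of_le h1 with h1' | h1'
    · -- i = 1
      have hi : i = 1 := h1'.symm
      subst hi
      rw [hOxeq]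
      have e1 : (1 : ℕ) - 1 = 0 := by omega
      rw [e1]
      rw [hF0 j, hF0 (j-1)]
      rw [bot_inf_eq, Submodule.bot_orthogonal_eq_top, inf_top_eq]
      simp only [finrank_bot]
      omega
    · -- 2 ≤ i
      have hA' : F (i - 1) j ≤ F i j :=
        hle (i - 1) j i j (by omega) h1 (by omega) h3 (by omega) le_rfl
      have hD' : F (i - 1) (j - 1) ≤ F (i - 1) j :=
        hle (i - 1) (j - 1) (i - 1) j (by omega) (by omega) (by omega) h3 le_rfl (by omega)
      have hB : finrank ℝ ↥(F (i - 1) j ⊓ (F (i - 1) (j - 1))ᗮ) + finrank ℝ ↥(F (i - 1) (j - 1))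
          = finrank ℝ ↥(F (i - 1) j) :=
        finrank_inf_orthogonal' _ _ (inf_orthogonal_bot_of_le hD')
      have hintij : F i (j - 1) ⊓ F (i - 1) j = F (i - 1) (j - 1) := by
        have h := hint (i - 1) (j - 1) (by omega) (by omega) (by omega)
        have e1 : i - 1 + 1 = i := by omega
        have e2 : j - 1 + 1 = j := by omega
        rw [e1, e2] at h
        exact h
      have hdisj : (F (i - 1) j ⊓ (F (i - 1) (j - 1))ᗮ) ⊓ (F i j ⊓ (F i (j - 1))ᗮ)ᗮ = ⊥ := by
        rw [eq_bot_iff]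
        rintro v ⟨⟨hvA', hvD'o⟩, hvGo⟩
        have hvD : v ∈ F i (j - 1) :=
          ortho_inf_le (F i j) (F i (j - 1)) hD ⟨hA' hvA', hvGo⟩
        have hvD' : v ∈ F (i - 1) (j - 1) := by
          rw [← hintij]; exact ⟨hvD, hvA'⟩
        exact (Submodule.orthogonal_disjoint (F (i - 1) (j - 1))).le_bot ⟨hvD', hvD'o⟩
      have hmain := finrank_inf_orthogonal'
        (F i j ⊓ (F i (j - 1))ᗮ) (F (i - 1) j ⊓ (F (i - 1) (j - 1))ᗮ) hdisj
      rw [hOxeq]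
      omega
  -- membership in SegFinset
  have hmemSeg : ∀ i j : ℕ, (i, j) ∈ SegFinset n ↔ (1 ≤ i ∧ i ≤ j ∧ j ≤ n + 1) := by
    intro i j
    simp only [SegFinset, Finset.mem_filter, Finset.mem_product, Finset.mem_Icc]
    omega
  -- Ox ≤ F
  have hOxle : ∀ i j : ℕ, Ox F i j ≤ F i j := by
    intro i j
    unfold Ox sdiffOrtho
    split
    · rename_i h; subst h; exact inf_le_left
    · exact le_trans inf_le_left inf_le_left
  -- spanning
  have hspan : (∑ p ∈ SegFinset n, Ox F p.1 p.2) = F (n + 1) (n + 1) := by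
    rw [sum_eq_sup']
    apply le_antisymm
    · apply Finset.sup_le
      rintro ⟨i, j⟩ hp
      rw [hmemSeg] at hp
      exact le_trans (hOxle i j)
        (hle i j (n + 1) (n + 1) hp.2.1 (by omega) le_rfl le_rfl (by omega) hp.2.2)
    · have key : ∀ m i j : ℕ, i + j ≤ m → 1 ≤ i → i ≤ j → j ≤ n + 1 →
          F i j ≤ (SegFinset n).sup (fun p => Ox F p.1 p.2) := by
        intro m
        induction m with
        | zero => intro i j hm h1 _ _; omega
        | succ m ih =>
          intro i j hm h1 hij hj
          have hOxT : Ox F i j ≤ (SegFinset n).sup (fun p => Ox F p.1 p.2) :=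
            Finset.le_sup (f := fun p => Ox F p.1 p.2) ((hmemSeg i j).mpr ⟨h1, hij, hj⟩)
          have hprev : ∀ k l : ℕ, k + l ≤ m → k ≤ l → l ≤ n + 1 →
              F k l ≤ (SegFinset n).sup (fun p => Ox F p.1 p.2) := by
            intro k l hkl hk2 hk3
            rcases Nat.eq_zero_or_pos k with rfl | hk
            · rw [hF0]; exact bot_le
            · exact ih k l hkl hk hk2 hk3
          rcases eq_or_lt_of_le hij with rfl | hlt
          · -- diagonal
            have hD : F (i - 1) i ≤ F i i :=
              hle (i - 1) i i i (by omega) h1 le_rfl hj (by omega) le_rfl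
            have hOxeq : Ox F i i = F i i ⊓ (F (i - 1) i)ᗮ := by simp [Ox, sdiffOrtho]
            rw [← sup_sdiff_eq (F i i) (F (i - 1) i) hD]
            apply sup_le
            · exact hprev (i - 1) i (by omega) (by omega) hj
            · rw [← hOxeq]; exact hOxT
          · -- off-diagonal
            have hne : ¬ (i = j) := by omega
            have hD : F i (j - 1) ≤ F i j :=
              hle i (j - 1) i j (by omega) h1 (by omega) hj le_rfl (by omega)
            have hB : F (i - 1) j ⊓ (F (i - 1) (j - 1))ᗮ ≤ F i j :=
              le_trans inf_le_left
                (hle (i - 1) j i j (by omega) h1 (by omega) hj (by omega) le_rfl)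
            have hOxeq : Ox F i j
                = (F i j ⊓ (F i (j - 1))ᗮ) ⊓ (F (i - 1) j ⊓ (F (i - 1) (j - 1))ᗮ)ᗮ := by
              simp only [Ox, sdiffOrtho, if_neg hne]
            refine le_trans
              (span_step (F i j) (F (i - 1) j ⊓ (F (i - 1) (j - 1))ᗮ) (F i (j - 1)) hD hB) ?_
            apply sup_le
            · rw [← hOxeq]; exact hOxT
            · apply sup_le
              · exact le_trans inf_le_left (hprev (i - 1) j (by omega) (by omega) hj)
              · exact hprev i (j - 1) (by omega) (by omega) (by omega)
      exact key (2 * n + 2) (n + 1) (n + 1) (by omega) (by omega) le_rfl le_rfl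
  -- sum of ranks
  have hsum : (∑ p ∈ SegFinset n, (finrank ℝ ↥(Ox F p.1 p.2) : ℤ))
      = (finrank ℝ ↥(F (n + 1) (n + 1)) : ℤ) := by
    rw [sum_SegFinset n (fun i j => (finrank ℝ ↥(Ox F i j) : ℤ))]
    have hrow : ∀ i ∈ Finset.Icc 1 (n + 1),
        (∑ j ∈ Finset.Icc i (n + 1), (finrank ℝ ↥(Ox F i j) : ℤ))
          = (finrank ℝ ↥(F i (n + 1)) : ℤ) - (finrank ℝ ↥(F (i - 1) (n + 1)) : ℤ) := by
      intro i hi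
      rw [Finset.mem_Icc] at hi
      set g : ℕ → ℤ :=
        fun j => (finrank ℝ ↥(F i j) : ℤ) - (finrank ℝ ↥(F (i - 1) j) : ℤ) with hg
      rw [Finset.Icc_eq_cons_Ioc hi.2, Finset.sum_cons]
      have hIoc : (∑ j ∈ Finset.Ioc i (n + 1), (finrank ℝ ↥(Ox F i j) : ℤ))
          = ∑ j ∈ Finset.Ioc i (n + 1), (g j - g (j - 1)) := by
        apply Finset.sum_congr rfl
        intro j hj
        rw [Finset.mem_Ioc] at hj
        have h := hoff i j hi.1 hj.1 hj.2
        simp only [hg]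
        omega
      rw [hIoc, telescope_Ioc g i (n + 1) (by omega)]
      have hd := hdiag i hi.1 hi.2
      simp only [hg]
      omega
    rw [Finset.sum_congr rfl hrow]
    have hIcc : Finset.Icc 1 (n + 1) = Finset.Ioc 0 (n + 1) := Finset.Icc_add_one_left_eq_Ioc 0 (n + 1)
    rw [hIcc]
    have htel := telescope_Ioc (fun k => (finrank ℝ ↥(F k (n + 1)) : ℤ)) 0 (n + 1) (by omega)
    have h0 : (finrank ℝ ↥(F 0 (n + 1)) : ℤ) = 0 := by rw [hF0]; simp
    calc (∑ i ∈ Finset.Ioc 0 (n + 1),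
            ((finrank ℝ ↥(F i (n + 1)) : ℤ) - (finrank ℝ ↥(F (i - 1) (n + 1)) : ℤ)))
        = (finrank ℝ ↥(F (n + 1) (n + 1)) : ℤ) - (finrank ℝ ↥(F 0 (n + 1)) : ℤ) := htel
      _ = (finrank ℝ ↥(F (n + 1) (n + 1)) : ℤ) := by rw [h0, sub_zero]
  -- conclusion
  rw [hspan]
  have hfinal : ((∑ p ∈ SegFinset n, finrank ℝ ↥(Ox F p.1 p.2) : ℕ) : ℤ)
      = (finrank ℝ ↥(F (n + 1) (n + 1)) : ℤ) := by
    push_cast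
    exact hsum
  exact_mod_cast hfinal.symm
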